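/- arXiv:1209.5890 — 2 statements merged into one kernel-verified Lean document; each statement's English description precedes it below -/
import Mathlib

section
/- Let I ⊆ S = K[x_1,…,x_n] be a matroidal ideal generated in degree d, and let s denote the number of connected components of the linear relation graph Γ_I of I. Then s ≤ d. -/
open MvPolynomial

noncomputable section

/-- The depth of `S/I` as a module over `S = K[x_1,…,x_n]` with respect to the graded
maximal ideal `𝔪 = (x_1,…,x_n)`: the supremum of lengths of regular sequences on `S/I`
consisting of elements of `𝔪`. -/
def mDepth (n : ℕ) (K : Type*) [Field K] (I : Ideal (MvPolynomial (Fin n) K)) : ℕ :=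
  sSup {k : ℕ | ∃ rs : List (MvPolynomial (Fin n) K), rs.length = k ∧
    (∀ r ∈ rs, r ∈ Ideal.span (Set.range (X : Fin n → MvPolynomial (Fin n) K))) ∧
    RingTheory.Sequence.IsRegular (MvPolynomial (Fin n) K ⧸ I) rs}

/-- `I` has a constant depth function: `depth S/I^k = depth S/I` for all `k ≥ 1`. -/
def HasConstantDepthFunction (n : ℕ) (K : Type*) [Field K]
    (I : Ideal (MvPolynomial (Fin n) K)) : Prop :=
  ∀ k : ℕ, 1 ≤ k → mDepth n K (I ^ k) = mDepth n K I

/-- The depth of a Noetherian local ring: supremum of lengths of regular sequences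
contained in the maximal ideal. -/
def localRingDepth (R : Type*) [CommRing R] [IsLocalRing R] : ℕ :=
  sSup {k : ℕ | ∃ rs : List R, rs.length = k ∧
    (∀ r ∈ rs, r ∈ IsLocalRing.maximalIdeal R) ∧
    RingTheory.Sequence.IsRegular R rs}

/-- A commutative ring is Cohen–Macaulay if for every prime `p` the localization at `p`
has depth equal to its Krull dimension. -/
def IsCohenMacaulayRing (R : Type*) [CommRing R] : Prop :=
  ∀ (p : Ideal R) [p.IsPrime],
    ringKrullDim (Localization.AtPrime p) =
      (localRingDepth (Localization.AtPrime p) : WithBot ℕ∞)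

/-- `I` is a monomial ideal generated by monomials in the variables from `T`. -/
def IsMonomialIdealOn (n : ℕ) (K : Type*) [Field K]
    (I : Ideal (MvPolynomial (Fin n) K)) (T : Set (Fin n)) : Prop :=
  ∃ A : Set (Fin n →₀ ℕ), (∀ a ∈ A, (a.support : Set (Fin n)) ⊆ T) ∧
    I = Ideal.span ((fun a => (monomial a (1 : K) : MvPolynomial (Fin n) K)) '' A)

/-- `I` is a monomial ideal. -/
def IsMonomialIdeal (n : ℕ) (K : Type*) [Field K]
    (I : Ideal (MvPolynomial (Fin n) K)) : Prop :=
  IsMonomialIdealOn n K I Set.univ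

/-- `I` and `J` are monomial ideals generated in disjoint sets of variables. -/
def GeneratedInDisjointVars (n : ℕ) (K : Type*) [Field K]
    (I J : Ideal (MvPolynomial (Fin n) K)) : Prop :=
  ∃ T₁ T₂ : Set (Fin n), Disjoint T₁ T₂ ∧
    IsMonomialIdealOn n K I T₁ ∧ IsMonomialIdealOn n K J T₂

/-- The ideal of the Rees algebra `R(I)` generated by the image of the graded maximal
ideal `𝔪 ⊆ S`. -/
def fiberIdeal (n : ℕ) (K : Type*) [Field K] (I : Ideal (MvPolynomial (Fin n) K)) :
    Ideal (reesAlgebra I) :=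
  Ideal.span ((algebraMap (MvPolynomial (Fin n) K) (reesAlgebra I)) ''
    ((Ideal.span (Set.range (X : Fin n → MvPolynomial (Fin n) K)) :
      Ideal (MvPolynomial (Fin n) K)) : Set (MvPolynomial (Fin n) K)))

/-- The analytic spread `ℓ(I)`: the Krull dimension of the fiber ring
`R(I)/𝔪R(I)` of the Rees algebra of `I`. -/
def analyticSpread (n : ℕ) (K : Type*) [Field K]
    (I : Ideal (MvPolynomial (Fin n) K)) : ℕ :=
  ((ringKrullDim ((reesAlgebra I) ⧸ fiberIdeal n K I)).unbotD 0).untopD 0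

/-- `B` is the set of supports of the minimal monomial generators of a matroidal ideal
generated in degree `d`: a nonempty family of `d`-subsets of the variables satisfying
the exchange property. -/
def IsMatroidalGens (n d : ℕ) (B : Finset (Finset (Fin n))) : Prop :=
  B.Nonempty ∧ (∀ u ∈ B, u.card = d) ∧
    ∀ u ∈ B, ∀ v ∈ B, ∀ i ∈ u, i ∉ v →
      ∃ j, j ∈ v ∧ j ∉ u ∧ insert j (u.erase i) ∈ B

/-- The squarefree monomial ideal whose minimal generators are the monomials
`∏_{i ∈ u} x_i`, `u ∈ B`. -/
def sqfreeIdeal (n : ℕ) (K : Type*) [Field K] (B : Finset (Finset (Fin n))) :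
    Ideal (MvPolynomial (Fin n) K) :=
  Ideal.span ((fun u : Finset (Fin n) => ∏ i ∈ u, (X i : MvPolynomial (Fin n) K)) '' B)

/-- The linear relation graph `Γ_I` of the squarefree monomial ideal with generators `B`:
`{x_i, x_j}` is an edge iff there are generators `u_k, u_l` with `x_i u_k = x_j u_l`. -/
def linRelGraph (n : ℕ) (B : Finset (Finset (Fin n))) : SimpleGraph (Fin n) :=
  SimpleGraph.fromRel (fun i j => ∃ u ∈ B, j ∈ u ∧ i ∉ u ∧ insert i (u.erase j) ∈ B)

/-- The vertex set `V(Γ_I)` of the linear relation graph. -/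
def linRelVerts (n : ℕ) (B : Finset (Finset (Fin n))) : Set (Fin n) :=
  {i | ∃ j, (linRelGraph n B).Adj i j}

/-- The number `s` of connected components of the linear relation graph `Γ_I`
(as a graph on its vertex set `V(Γ_I)`). -/
noncomputable def numComponentsLRG (n : ℕ) (B : Finset (Finset (Fin n))) : ℕ :=
  Nat.card ((linRelGraph n B).induce (linRelVerts n B)).ConnectedComponent

/-- Every vertex of the linear relation graph lies in some generator. -/
lemma vert_mem_gen (n : ℕ) (B : Finset (Finset (Fin n))) {i : Fin n}
    (hi : i ∈ linRelVerts n B) : ∃ u ∈ B, i ∈ u := by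
  obtain ⟨j, hadj⟩ := hi
  rw [linRelGraph, SimpleGraph.fromRel_adj] at hadj
  obtain ⟨hne, h | h⟩ := hadj
  · obtain ⟨u, hu, _, _, hins⟩ := h
    exact ⟨insert i (u.erase j), hins, Finset.mem_insert_self _ _⟩
  · obtain ⟨u, hu, hiu, _, _⟩ := h
    exact ⟨u, hu, hiu⟩

/-- From a vertex `i` of `Γ` we can reach (inside the induced graph) a vertex lying in
any prescribed generator `u`. -/
lemma reach_gen (n d : ℕ) (B : Finset (Finset (Fin n))) (hB : IsMatroidalGens n d B)
    {i : Fin n} (hi : i ∈ linRelVerts n B) {u : Finset (Fin n)} (hu : u ∈ B) :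
    ∃ j, ∃ hj : j ∈ linRelVerts n B, j ∈ u ∧
      ((linRelGraph n B).induce (linRelVerts n B)).Reachable ⟨i, hi⟩ ⟨j, hj⟩ := by
  obtain ⟨u', hu', hiu'⟩ := vert_mem_gen n B hi
  by_cases hiu : i ∈ u
  · exact ⟨i, hi, hiu, SimpleGraph.Reachable.refl _⟩
  · obtain ⟨j, hju, hju', hins⟩ := hB.2.2 u' hu' u hu i hiu' hiu
    have hne : i ≠ j := fun h => hju' (h ▸ hiu')
    have hadj : (linRelGraph n B).Adj i j := by
      rw [linRelGraph, SimpleGraph.fromRel_adj]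
      exact ⟨hne, Or.inr ⟨u', hu', hiu', hju', hins⟩⟩
    have hj : j ∈ linRelVerts n B := ⟨i, hadj.symm⟩
    refine ⟨j, hj, hju, SimpleGraph.Adj.reachable ?_⟩
    exact hadj

/-- Let `I` be a matroidal ideal generated in degree `d`, and let `s` be
the number of connected components of its linear relation graph `Γ_I`. Then `s ≤ d`. -/
theorem numComponents_le_degree (n d : ℕ) (K : Type*) [Field K]
    (B : Finset (Finset (Fin n))) (hB : IsMatroidalGens n d B)
    (I : Ideal (MvPolynomial (Fin n) K)) (hI : I = sqfreeIdeal n K B) :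
    numComponentsLRG n B ≤ d := by
  classical
  obtain ⟨u₀, hu₀⟩ := hB.1
  set G := (linRelGraph n B).induce (linRelVerts n B) with hG
  have key : ∀ c : G.ConnectedComponent, ∃ j : Fin n, j ∈ u₀ ∧
      ∃ hj : j ∈ linRelVerts n B, G.connectedComponentMk ⟨j, hj⟩ = c := by
    intro c
    obtain ⟨⟨i, hi⟩, hrep⟩ := c.exists_rep
    obtain ⟨j, hj, hju, hreach⟩ := reach_gen n d B hB hi hu₀
    exact ⟨j, hju, hj, by
      rw [← hrep]
      exact (SimpleGraph.ConnectedComponent.sound hreach).symm⟩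
  let f : G.ConnectedComponent → {x // x ∈ u₀} :=
    fun c => ⟨(key c).choose, (key c).choose_spec.1⟩
  have hf : Function.Injective f := by
    intro c₁ c₂ h
    obtain ⟨h₁, hj₁, hc₁⟩ := (key c₁).choose_spec
    obtain ⟨h₂, hj₂, hc₂⟩ := (key c₂).choose_spec
    have : (key c₁).choose = (key c₂).choose := congrArg Subtype.val h
    rw [← hc₁, ← hc₂]
    congr 1
    exact Subtype.ext this
  have := Nat.card_le_card_of_injective f hf
  have hcard : Nat.card {x // x ∈ u₀} = d := by
    rw [Nat.card_eq_fintype_card, Fintype.card_coe]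
    exact hB.2.1 u₀ hu₀
  calc numComponentsLRG n B = Nat.card G.ConnectedComponent := rfl
    _ ≤ Nat.card {x // x ∈ u₀} := this
    _ = d := hcard

end
end

section
/- Let I ⊆ S = K[x_1,…,x_n] be a matroidal ideal generated in degree d with Supp(I) = {x_1,…,x_n} and gcd(I) = 1. Let Γ_1,…,Γ_s be the connected components of the linear relation graph Γ_I, and let P_1,…,P_s be the monomial prime ideals generated by the sets of vertices of Γ_1,…,Γ_s respectively. Then I ⊆ P_1 ∩ ⋯ ∩ P_s. -/
open MvPolynomial

noncomputable section

/-- Let `I` be a matroidal ideal generated in degree `d` with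
`Supp(I) = {x_1,…,x_n}` and `gcd(I) = 1`. If `P_1,…,P_s` are the monomial prime ideals
generated by the vertex sets of the connected components of `Γ_I`, then
`I ⊆ P_1 ∩ ⋯ ∩ P_s`. -/
theorem matroidal_subset_component_primes (n d : ℕ) (K : Type*) [Field K]
    (B : Finset (Finset (Fin n))) (hB : IsMatroidalGens n d B)
    (hsupp : ∀ i : Fin n, ∃ u ∈ B, i ∈ u)
    (hgcd : ∀ i : Fin n, ∃ u ∈ B, i ∉ u)
    (I : Ideal (MvPolynomial (Fin n) K)) (hI : I = sqfreeIdeal n K B) :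
    ∀ c : ((linRelGraph n B).induce (linRelVerts n B)).ConnectedComponent,
      I ≤ Ideal.span
        ((fun i => (X i : MvPolynomial (Fin n) K)) '' (Subtype.val '' c.supp)) := by
  intro c
  obtain ⟨hne, hcard, hex⟩ := hB
  subst hI
  rw [sqfreeIdeal, Ideal.span_le]
  rintro _ ⟨u, hu, rfl⟩
  obtain ⟨v, rfl⟩ := c.exists_rep
  -- find i₀ ∈ u lying in the component of v
  have key : ∃ i₀ ∈ u, (X i₀ : MvPolynomial (Fin n) K) ∈
      ((fun i => (X i : MvPolynomial (Fin n) K)) ''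
        (Subtype.val '' (((linRelGraph n B).induce (linRelVerts n B)).connectedComponentMk v).supp)) := by
    by_cases h : (v : Fin n) ∈ u
    · exact ⟨v, h, ⟨v, ⟨v, rfl, rfl⟩, rfl⟩⟩
    · obtain ⟨w, hw, hiw⟩ := hsupp (v : Fin n)
      obtain ⟨j, hju, hjnw, hB'⟩ := hex w hw u hu (v : Fin n) hiw h
      have hne' : (v : Fin n) ≠ j := fun h => hjnw (h ▸ hiw)
      have hjw : j ∉ w.erase (v : Fin n) := fun h => hjnw (Finset.mem_of_mem_erase h)
      have adj : (linRelGraph n B).Adj (v : Fin n) j := by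
        rw [linRelGraph, SimpleGraph.fromRel_adj]
        refine ⟨hne', Or.inl ⟨insert j (w.erase (v : Fin n)), hB',
          Finset.mem_insert_self _ _, ?_, ?_⟩⟩
        · intro hmem
          rcases Finset.mem_insert.mp hmem with h1 | h1
          · exact hne' h1
          · exact Finset.notMem_erase _ _ h1
        · rw [Finset.erase_insert hjw, Finset.insert_erase hiw]
          exact hw
      have hjv : j ∈ linRelVerts n B := ⟨v, adj.symm⟩
      have adj' : ((linRelGraph n B).induce (linRelVerts n B)).Adj v ⟨j, hjv⟩ := adj
      refine ⟨j, hju, ⟨j, ⟨⟨j, hjv⟩, ?_, rfl⟩, rfl⟩⟩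
      rw [SimpleGraph.ConnectedComponent.mem_supp_iff]
      exact SimpleGraph.ConnectedComponent.sound adj'.symm.reachable
  obtain ⟨i₀, hi₀, hXi₀⟩ := key
  show (∏ i ∈ u, (X i : MvPolynomial (Fin n) K)) ∈ _
  rw [← Finset.mul_prod_erase u _ hi₀]
  exact Ideal.mul_mem_right _ _ (Ideal.subset_span hXi₀)

end
end
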